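/- If H is a panchromatic pattern, then every directed cycle of length at least 4 in the complement digraph G = H^c is symmetric, i.e., every arc of such a cycle has its reverse also in G. -/

import Mathlib

/-- A walk in `D` (as a list of at least two vertices) whose sequence of
arc-colours (given by `ς`) forms a walk in `H`. -/
def IsHWalk {V W : Type} (D : V → V → Prop) (H : W → W → Prop) (ς : V → V → W)
    (l : List V) : Prop :=
  2 ≤ l.length ∧ l.Chain' D ∧ ((l.zip l.tail).map fun p => ς p.1 p.2).Chain' H

/-- There is an `H`-walk in `D` from `a` to `b`. -/
def HReach {V W : Type} (D : V → V → Prop) (H : W → W → Prop) (ς : V → V → W)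
    (a b : V) : Prop :=
  ∃ l : List V, IsHWalk D H ς l ∧ l.head? = some a ∧ l.getLast? = some b

/-- `K` is an `H`-kernel of the `H`-coloured digraph `D`: it is `H`-independent
and `H`-absorbent. -/
def IsHKernel {V W : Type} (D : V → V → Prop) (H : W → W → Prop) (ς : V → V → W)
    (K : Set V) : Prop :=
  (∀ a ∈ K, ∀ b ∈ K, a ≠ b → ¬ HReach D H ς a b) ∧
  (∀ v, v ∉ K → ∃ b ∈ K, HReach D H ς v b)

/-- `H` is a panchromatic pattern: every digraph with every `H`-colouring
admits an `H`-kernel. -/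
def IsPanchromatic {W : Type} (H : W → W → Prop) : Prop :=
  ∀ (V : Type) (D : V → V → Prop) (ς : V → V → W), ∃ K : Set V, IsHKernel D H ς K

/-- `H` is bicomplete: the vertex set splits as `X ⊔ Xᶜ`, both parts induce
complete digraphs (with loops), and all arcs from `Xᶜ` to `X` are present. -/
def IsBicomplete {W : Type} (H : W → W → Prop) : Prop :=
  ∃ X : Set W, (∀ a ∈ X, ∀ b ∈ X, H a b) ∧ (∀ a ∉ X, ∀ b ∉ X, H a b) ∧
    (∀ x ∈ X, ∀ y ∉ X, H y x)

/-- `H` is an expansion of `2K₁`: two nonempty classes, each inducing a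
complete looped digraph, with no arcs between them. -/
def IsExpansion2K1 {W : Type} (H : W → W → Prop) : Prop :=
  ∃ C : Set W, C.Nonempty ∧ Cᶜ.Nonempty ∧
    (∀ a ∈ C, ∀ b ∈ C, H a b) ∧ (∀ a ∈ Cᶜ, ∀ b ∈ Cᶜ, H a b) ∧
    (∀ a b, (a ∈ C ∧ b ∈ Cᶜ) ∨ (a ∈ Cᶜ ∧ b ∈ C) → ¬ H a b)

/- ### Auxiliary machinery -/

section Walks

variable {V W : Type} {D : V → V → Prop} {H : W → W → Prop} {ς : V → V → W}

/-- Every arc gives an `H`-walk of length one. -/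
lemma hreach_arc {a b : V} (h : D a b) : HReach D H ς a b :=
  ⟨[a, b], ⟨by simp, by simp [List.Chain', h], by simp [List.Chain']⟩, by simp, by simp⟩

/-- Two composable arcs whose colours form an arc of `H` give an `H`-walk. -/
lemma hreach_two {a b c : V} (hab : D a b) (hbc : D b c)
    (hh : H (ς a b) (ς b c)) : HReach D H ς a c :=
  ⟨[a, b, c], ⟨by simp [List.Chain'], by simp [List.Chain', hab, hbc], by simp [List.Chain', hh]⟩, by simp, by simp⟩

/-- If no two composable arcs have colours forming an arc of `H`,
then `H`-reachability coincides with the arc relation. -/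
lemma hreach_char_simple
    (hcomp : ∀ p q r : V, D p q → D q r → ¬ H (ς p q) (ς q r))
    {a b : V} (h : HReach D H ς a b) : D a b := by
  obtain ⟨l, ⟨hlen, hcD, hcH⟩, hhead, hlast⟩ := h
  rcases l with _ | ⟨p, _ | ⟨q, _ | ⟨r, rest⟩⟩⟩
  · simp at hhead
  · simp at hlen
  · have ha : p = a := by simpa using hhead
    have hb : q = b := by simpa using hlast
    simp only [List.Chain', List.isChain_cons_cons, List.isChain_singleton, and_true] at hcD
    exact ha ▸ hb ▸ hcD
  · simp only [List.Chain', List.isChain_cons_cons] at hcD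
    simp only [List.tail_cons, List.zip_cons_cons, List.map_cons,
      List.Chain', List.isChain_cons_cons] at hcH
    exact absurd hcH.1 (hcomp p q r hcD.1 hcD.2.1)

/-- If the only composable pair of arcs whose colours form an arc of `H` is
the pair `(v0,v1), (v1,v2)`, then any `H`-walk is a single arc or that
particular two-arc walk. -/
lemma hreach_char {v0 v1 v2 : V}
    (hkey : ∀ p q r : V, D p q → D q r → H (ς p q) (ς q r) →
      p = v0 ∧ q = v1 ∧ r = v2)
    (hne : v1 ≠ v0)
    {a b : V} (h : HReach D H ς a b) : D a b ∨ (a = v0 ∧ b = v2) := by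
  obtain ⟨l, ⟨hlen, hcD, hcH⟩, hhead, hlast⟩ := h
  rcases l with _ | ⟨p, _ | ⟨q, _ | ⟨r, rest⟩⟩⟩
  · simp at hhead
  · simp at hlen
  · have ha : p = a := by simpa using hhead
    have hb : q = b := by simpa using hlast
    simp only [List.Chain', List.isChain_cons_cons, List.isChain_singleton, and_true] at hcD
    exact Or.inl (ha ▸ hb ▸ hcD)
  · have ha : p = a := by simpa using hhead
    cases rest with
    | nil =>
      have hb : r = b := by simpa using hlast
      simp only [List.Chain', List.isChain_cons_cons, List.isChain_singleton, and_true] at hcD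
      simp only [List.tail_cons, List.zip_cons_cons, List.map_cons,
        List.zip_nil_right, List.map_nil, List.Chain', List.isChain_cons_cons,
        List.isChain_singleton, and_true] at hcH
      obtain ⟨e0, e1, e2⟩ := hkey p q r hcD.1 hcD.2 hcH
      exact Or.inr ⟨ha ▸ e0, hb ▸ e2⟩
    | cons u rest' =>
      simp only [List.Chain', List.isChain_cons_cons] at hcD
      obtain ⟨h1, h2, h3, -⟩ := hcD
      simp only [List.tail_cons, List.zip_cons_cons, List.map_cons,
        List.Chain', List.isChain_cons_cons] at hcH
      obtain ⟨hH1, hH2, -⟩ := hcH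
      have e := hkey p q r h1 h2 hH1
      have e' := hkey q r u h2 h3 hH2
      exact absurd (e.2.1.symm.trans e'.1) hne

end Walks

/-- Parity propagation of membership along a chain of "alternation" facts. -/
lemma chainK_parity {K : Set ℕ} {m t : ℕ}
    (A : ∀ i, t ≤ i → i + 1 < m → (i ∈ K ↔ (i + 1) ∉ K)) :
    ∀ j, t + j < m → ((t + j) ∈ K ↔ (Even j ↔ t ∈ K)) := by
  intro j
  induction j with
  | zero => intro _; simp
  | succ n ih =>
    intro h
    have h1 := ih (by omega)
    have h2 := A (t + n) (by omega) (by omega)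
    have h3 : t + (n + 1) = (t + n) + 1 := by omega
    rw [h3, Nat.even_add_one]
    tauto

/- The gadget digraph for the even case: a directed cycle of length `m = k+2`
together with a pendant arc `1 → m`. -/

/-- Arcs of the gadget digraph. -/
def gD (m : ℕ) : ℕ → ℕ → Prop :=
  fun a b => (a < m ∧ b = (a + 1) % m) ∨ (a = 1 ∧ b = m)

/-- Colours along the cycle. -/
def gc {W : Type} (y : ℕ → W) : ℕ → W :=
  fun a => if a = 0 then y 1 else if a = 1 then y 0 else y (a - 1)

/-- The colouring of the gadget digraph. -/
def gς {W : Type} (m : ℕ) (y : ℕ → W) : ℕ → ℕ → W :=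
  fun a b => if b = m then y 2 else gc y a

lemma gkey {W : Type} {H : W → W → Prop} {k : ℕ} (hk : 4 ≤ k) {y : ℕ → W}
    (hyk : y k = y 0) (hF : ∀ t, ¬ H (y t) (y (t + 1))) :
    ∀ p q r : ℕ, gD (k + 2) p q → gD (k + 2) q r →
      H (gς (k + 2) y p q) (gς (k + 2) y q r) → p = 0 ∧ q = 1 ∧ r = 2 := by
  intro p q r hpq hqr hh
  rcases hpq with ⟨hp, rfl⟩ | ⟨rfl, rfl⟩
  · have hqlt : (p + 1) % (k + 2) < k + 2 := Nat.mod_lt _ (by omega)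
    have hς1 : gς (k + 2) y p ((p + 1) % (k + 2)) = gc y p := by
      simp only [gς, if_neg (by omega : ¬ (p + 1) % (k + 2) = k + 2)]
    rcases hqr with ⟨hq, rfl⟩ | ⟨hq1, rfl⟩
    · -- both arcs on the cycle
      have hqlt2 : ((p + 1) % (k + 2) + 1) % (k + 2) < k + 2 :=
        Nat.mod_lt _ (by omega)
      have hς2 : gς (k + 2) y ((p + 1) % (k + 2)) (((p + 1) % (k + 2) + 1) % (k + 2))
          = gc y ((p + 1) % (k + 2)) := by
        simp only [gς,
          if_neg (by omega : ¬ ((p + 1) % (k + 2) + 1) % (k + 2) = k + 2)]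
      rw [hς1, hς2] at hh
      by_cases hp0 : p = 0
      · subst hp0
        refine ⟨rfl, ?_, ?_⟩
        · simpa using Nat.mod_eq_of_lt (by omega : 1 < k + 2)
        · rw [Nat.mod_eq_of_lt (by omega : 0 + 1 < k + 2)]
          exact Nat.mod_eq_of_lt (by omega)
      · exfalso
        have hcases : p = 1 ∨ (2 ≤ p ∧ p + 1 < k + 2) ∨ p + 1 = k + 2 := by omega
        rcases hcases with h1 | ⟨h2, h3⟩ | h4
        · subst h1
          rw [show (1 + 1) % (k + 2) = 2 from Nat.mod_eq_of_lt (by omega)] at hh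
          simp only [gc, if_neg (by omega : ¬ (2:ℕ) = 0),
            if_neg (by omega : ¬ (2:ℕ) = 1), if_pos rfl] at hh
          exact hF 0 (by simpa using hh)
        · rw [Nat.mod_eq_of_lt h3] at hh
          simp only [gc, if_neg hp0, if_neg (by omega : ¬ p + 1 = 0),
            if_neg (by omega : ¬ p = 1), if_neg (by omega : ¬ p + 1 = 1)] at hh
          have he : p + 1 - 1 = (p - 1) + 1 := by omega
          rw [he] at hh
          exact hF (p - 1) hh
        · rw [show (p + 1) % (k + 2) = 0 by rw [h4]; exact Nat.mod_self _] at hh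
          simp only [gc, if_neg hp0, if_neg (by omega : ¬ p = 1), if_pos rfl] at hh
          have hp1 : p - 1 = k := by omega
          rw [hp1, hyk] at hh
          exact hF 0 hh
    · -- second arc is the pendant arc, so q = 1, forcing p = 0
      exfalso
      have hp0 : p = 0 := by
        rcases (by omega : p + 1 < k + 2 ∨ p + 1 = k + 2) with h | h
        · rw [Nat.mod_eq_of_lt h] at hq1; omega
        · rw [h, Nat.mod_self] at hq1; omega
      subst hp0
      rw [hq1] at hς1 hh
      rw [hς1] at hh
      simp only [gς, if_pos rfl] at hh
      simp only [gc, if_pos rfl] at hh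
      exact hF 1 hh
  · -- first arc is the pendant arc: no arc leaves `k+2`
    exfalso
    rcases hqr with ⟨h, -⟩ | ⟨h, -⟩ <;> omega

lemma even_no_kernel {W : Type} {H : W → W → Prop} (hH : IsPanchromatic H)
    {k : ℕ} (hk : 4 ≤ k) (hke : Even k) {y : ℕ → W} (hyk : y k = y 0)
    (hF : ∀ t, ¬ H (y t) (y (t + 1))) (hA : H (y 1) (y 0)) : False := by
  obtain ⟨K, hind, habs⟩ := hH ℕ (gD (k + 2)) (gς (k + 2) y)
  have hkey := gkey (H := H) hk hyk hF
  have hchar : ∀ a b : ℕ, HReach (gD (k + 2)) H (gς (k + 2) y) a b →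
      gD (k + 2) a b ∨ (a = 0 ∧ b = 2) :=
    fun a b h => hreach_char hkey (by omega) h
  -- basic arcs
  have arc : ∀ i : ℕ, i + 1 < k + 2 → gD (k + 2) i (i + 1) :=
    fun i h => Or.inl ⟨by omega, (Nat.mod_eq_of_lt h).symm⟩
  have arclast : gD (k + 2) (k + 1) 0 :=
    Or.inl ⟨by omega, by rw [show k + 1 + 1 = k + 2 by omega, Nat.mod_self]⟩
  -- the pendant vertex `k+2` is a sink, hence lies in `K`
  have hmK : (k + 2) ∈ K := by
    by_contra h
    obtain ⟨b, hbK, hr⟩ := habs _ h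
    rcases hchar _ _ hr with (⟨h1, -⟩ | ⟨h1, -⟩) | ⟨h1, -⟩ <;> omega
  -- vertex 1 sees the pendant vertex, hence is not in `K`
  have h1K : 1 ∉ K := fun h1 =>
    hind 1 h1 (k + 2) hmK (by omega) (hreach_arc (Or.inr ⟨rfl, rfl⟩))
  -- alternation along the cycle from vertex 2 on
  have hAlt : ∀ i, 2 ≤ i → i + 1 < k + 2 → (i ∈ K ↔ (i + 1) ∉ K) := by
    intro i h2 h3
    constructor
    · intro hiK hi1K
      exact hind i hiK (i + 1) hi1K (by omega) (hreach_arc (arc i h3))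
    · intro h
      by_contra hiK
      obtain ⟨b, hbK, hr⟩ := habs i hiK
      rcases hchar _ _ hr with (⟨-, hb⟩ | ⟨h1, -⟩) | ⟨h1, -⟩
      · rw [Nat.mod_eq_of_lt h3] at hb
        exact h (hb ▸ hbK)
      · omega
      · omega
  have hchain := chainK_parity hAlt
  have hoddk1 : ¬ Even (k - 1) := by
    obtain ⟨n, hn⟩ := hke
    rintro ⟨t, ht⟩
    omega
  have hchain' := hchain (k - 1) (by omega)
  rw [show 2 + (k - 1) = k + 1 by omega] at hchain'
  -- the chord 0 → 2
  have a01 : gD (k + 2) 0 1 := arc 0 (by omega)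
  have a12 : gD (k + 2) 1 2 := arc 1 (by omega)
  have hchord : HReach (gD (k + 2)) H (gς (k + 2) y) 0 2 := by
    refine hreach_two a01 a12 ?_
    have e1 : gς (k + 2) y 0 1 = y 1 := by
      simp only [gς]
      rw [if_neg (show ¬ (1:ℕ) = k + 2 by omega)]
      simp [gc]
    have e2 : gς (k + 2) y 1 2 = y 0 := by
      simp only [gς]
      rw [if_neg (show ¬ (2:ℕ) = k + 2 by omega)]
      simp [gc]
    rw [e1, e2]
    exact hA
  by_cases h0 : 0 ∈ K
  · have h2K : 2 ∉ K := fun h2 => hind 0 h0 2 h2 (by omega) hchord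
    have hlastK : (k + 1) ∈ K := by tauto
    exact hind (k + 1) hlastK 0 h0 (by omega) (hreach_arc arclast)
  · obtain ⟨b, hbK, hr⟩ := habs 0 h0
    have h2K : 2 ∈ K := by
      rcases hchar _ _ hr with (⟨-, hb⟩ | ⟨h1, -⟩) | ⟨-, hb⟩
      · rw [show (0 + 1) % (k + 2) = 1 from Nat.mod_eq_of_lt (by omega)] at hb
        exact absurd (hb ▸ hbK) h1K
      · omega
      · exact hb ▸ hbK
    have hlastK : (k + 1) ∉ K := by tauto
    obtain ⟨b', hb'K, hr'⟩ := habs _ hlastK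
    rcases hchar _ _ hr' with (⟨-, hb'⟩ | ⟨h1, -⟩) | ⟨h1, -⟩
    · rw [show (k + 1 + 1) % (k + 2) = 0 by
        rw [show k + 1 + 1 = k + 2 by omega, Nat.mod_self]] at hb'
      exact h0 (hb' ▸ hb'K)
    · omega
    · omega

/- The gadget digraph for the odd case: a plain directed cycle of length `k`. -/

/-- Arcs of the directed cycle of length `k`. -/
def oD (k : ℕ) : ℕ → ℕ → Prop := fun a b => a < k ∧ b = (a + 1) % k

lemma odd_no_kernel {W : Type} {H : W → W → Prop} (hH : IsPanchromatic H)
    {k : ℕ} (hk : 3 ≤ k) (hko : Odd k) {y : ℕ → W} (hyk : y k = y 0)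
    (hF : ∀ t, ¬ H (y t) (y (t + 1))) : False := by
  obtain ⟨K, hind, habs⟩ := hH ℕ (oD k) (fun a _ => y a)
  have hcomp : ∀ p q r : ℕ, oD k p q → oD k q r →
      ¬ H ((fun a (_ : ℕ) => y a) p q) ((fun a (_ : ℕ) => y a) q r) := by
    rintro p q r ⟨hp, rfl⟩ ⟨hq, -⟩
    simp only
    rcases (by omega : p + 1 < k ∨ p + 1 = k) with h | h
    · rw [Nat.mod_eq_of_lt h]; exact hF p
    · rw [h, Nat.mod_self, ← hyk, ← h]; exact hF p
  have hchar : ∀ a b : ℕ, HReach (oD k) H (fun a _ => y a) a b → oD k a b :=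
    fun a b h => hreach_char_simple hcomp h
  have arc : ∀ i : ℕ, i + 1 < k → oD k i (i + 1) :=
    fun i h => ⟨by omega, (Nat.mod_eq_of_lt h).symm⟩
  have arclast : oD k (k - 1) 0 :=
    ⟨by omega, by rw [show k - 1 + 1 = k by omega, Nat.mod_self]⟩
  have hAlt : ∀ i, 0 ≤ i → i + 1 < k → (i ∈ K ↔ (i + 1) ∉ K) := by
    intro i _ h3
    constructor
    · intro hiK hi1K
      exact hind i hiK (i + 1) hi1K (by omega) (hreach_arc (arc i h3))
    · intro h
      by_contra hiK
      obtain ⟨b, hbK, hr⟩ := habs i hiK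
      obtain ⟨-, hb⟩ := hchar _ _ hr
      rw [Nat.mod_eq_of_lt h3] at hb
      exact h (hb ▸ hbK)
  have hchain := chainK_parity hAlt (k - 1) (by omega)
  rw [show 0 + (k - 1) = k - 1 by omega] at hchain
  have hevk1 : Even (k - 1) := by
    obtain ⟨n, hn⟩ := hko
    exact ⟨n, by omega⟩
  by_cases h0 : 0 ∈ K
  · have hlastK : (k - 1) ∈ K := by tauto
    exact hind (k - 1) hlastK 0 h0 (by omega) (hreach_arc arclast)
  · have hlastK : (k - 1) ∉ K := by tauto
    obtain ⟨b, hbK, hr⟩ := habs _ hlastK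
    obtain ⟨-, hb⟩ := hchar _ _ hr
    rw [show (k - 1 + 1) % k = 0 by rw [show k - 1 + 1 = k by omega, Nat.mod_self]] at hb
    exact h0 (hb ▸ hbK)

/-- If `H` is panchromatic, every directed cycle of length at least 4 in the
complement `G = Hᶜ` is symmetric. -/
theorem stmt8 {W : Type} (H : W → W → Prop) (hH : IsPanchromatic H)
    (k : ℕ) (x : ℕ → W) (hk : 4 ≤ k)
    (hinj : ∀ i < k, ∀ j < k, x i = x j → i = j) (hclosed : x k = x 0)
    (hcyc : ∀ i < k, ¬ H (x i) (x (i + 1))) :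
    ∀ i < k, ¬ H (x (i + 1)) (x i) := by
  intro i hi hrev
  have hk0 : 0 < k := by omega
  have hstep : ∀ a, a < k → ¬ H (x a) (x ((a + 1) % k)) := by
    intro a ha
    rcases (by omega : a + 1 < k ∨ a + 1 = k) with h | h
    · rw [Nat.mod_eq_of_lt h]; exact hcyc a ha
    · rw [h, Nat.mod_self, ← hclosed, ← h]; exact hcyc a ha
  rcases Nat.even_or_odd k with hke | hko
  · -- even case: rotate the cycle so that the reversed arc is `y 1 → y 0`
    refine even_no_kernel hH hk hke (y := fun t => x ((t + i) % k)) ?_ ?_ ?_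
    · simp only [Nat.add_mod_left, Nat.zero_add]
    · intro t
      have h1 : (t + 1 + i) % k = ((t + i) % k + 1) % k := by
        rw [Nat.mod_add_mod]
        congr 1
        omega
      rw [h1]
      exact hstep _ (Nat.mod_lt _ hk0)
    · rw [show (0 + i) % k = i from by rw [Nat.zero_add, Nat.mod_eq_of_lt hi]]
      rcases (by omega : i + 1 < k ∨ i + 1 = k) with h | h
      · rw [show 1 + i = i + 1 by omega, Nat.mod_eq_of_lt h]
        exact hrev
      · rw [show 1 + i = k by omega, Nat.mod_self, ← hclosed, ← h]
        exact hrev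
  · -- odd case: no reversed arc is needed
    refine odd_no_kernel hH (by omega : 3 ≤ k) hko (y := fun t => x (t % k)) ?_ ?_
    · simp only [Nat.mod_self, Nat.zero_mod]
    · intro t
      have h1 := hstep (t % k) (Nat.mod_lt _ hk0)
      rwa [Nat.mod_add_mod] at h1
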